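/- Let T_s, T_m, T_θ, K, D_g > 0 be constants, let ω_g : ℝ → ℝ be a continuous input, and let P_s, P_m, θ : ℝ → ℝ be differentiable functions satisfying for all t: T_s Ṗ_s(t) = −P_s(t) − K⁻¹ω_g(t) + θ(t), T_m Ṗ_m(t) = −P_m(t) + P_s(t), and T_θ θ̇(t) = −θ(t) + P_s(t) − (1 − K⁻¹)ω_g(t). Let P̄_s = P̄_m = θ̄ ∈ ℝ be constants. Define Z₂ = (T_θ/2)(θ − θ̄)² + (T_s/2)(P_s − P̄_s)² + (T_s/2)(P_m − P_s)². Then for all t: (−D_g ω_g(t)² + ω_g(t)(P_m(t) − P̄_m)) + d/dt Z₂(t) = v(t)ᵀ W v(t), where v(t) = (ω_g(t), P_s(t) − P_m(t), P_s(t) − θ(t))ᵀ and W is the symmetric 3×3 matrix with rows (−D_g, −½K⁻¹ − ½, −½K⁻¹ + ½), (−½K⁻¹ − ½, −T_s/T_m, −½), (−½K⁻¹ + ½, −½, −1). -/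

import Mathlib

open Matrix

/-- Dissipation identity for the interconnection of a generator bus and the
second-order turbine-governor with its controller:
`U̇_g + Ż₂ = vᵀ W v` with `v = (ω_g, P_s − P_m, P_s − θ)`. -/
theorem second_order_dissipation (Ts Tm Tθ K Dg : ℝ)
    (hTs : 0 < Ts) (hTm : 0 < Tm) (hTθ : 0 < Tθ) (hK : 0 < K) (hDg : 0 < Dg)
    (ωg Ps Pm θ : ℝ → ℝ) (hωg : Continuous ωg)
    -- T_s Ṗ_s = −P_s − K⁻¹ ω_g + θ :
    (hPs : ∀ t, HasDerivAt Ps ((-Ps t - K⁻¹ * ωg t + θ t) / Ts) t)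
    -- T_m Ṗ_m = −P_m + P_s :
    (hPm : ∀ t, HasDerivAt Pm ((-Pm t + Ps t) / Tm) t)
    -- T_θ θ̇ = −θ + P_s − (1 − K⁻¹) ω_g :
    (hθ : ∀ t, HasDerivAt θ ((-θ t + Ps t - (1 - K⁻¹) * ωg t) / Tθ) t)
    (Psb Pmb θb : ℝ) (h1 : Psb = Pmb) (h2 : Pmb = θb)
    (W : Matrix (Fin 3) (Fin 3) ℝ)
    (hW : W = !![-Dg,            -(K⁻¹/2) - 1/2, -(K⁻¹/2) + 1/2;
                 -(K⁻¹/2) - 1/2, -(Ts/Tm),       -(1/2);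
                 -(K⁻¹/2) + 1/2, -(1/2),         -1]) :
    ∀ t, (-Dg * (ωg t)^2 + ωg t * (Pm t - Pmb))
        + deriv (fun s => Tθ/2 * (θ s - θb)^2 + Ts/2 * (Ps s - Psb)^2
            + Ts/2 * (Pm s - Ps s)^2) t
      = ![ωg t, Ps t - Pm t, Ps t - θ t] ⬝ᵥ
          (W *ᵥ ![ωg t, Ps t - Pm t, Ps t - θ t]) := by
  intro t
  have hD : HasDerivAt (fun s => Tθ/2 * (θ s - θb)^2 + Ts/2 * (Ps s - Psb)^2
      + Ts/2 * (Pm s - Ps s)^2)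
      (Tθ/2 * (2 * (θ t - θb) * ((-θ t + Ps t - (1 - K⁻¹) * ωg t) / Tθ))
        + Ts/2 * (2 * (Ps t - Psb) * ((-Ps t - K⁻¹ * ωg t + θ t) / Ts))
        + Ts/2 * (2 * (Pm t - Ps t) * ((-Pm t + Ps t) / Tm
            - (-Ps t - K⁻¹ * ωg t + θ t) / Ts))) t := by
    have := (((((hθ t).sub_const θb).pow 2).const_mul (Tθ/2)).add
        ((((hPs t).sub_const Psb).pow 2).const_mul (Ts/2))).add
        (((((hPm t).sub (hPs t)).pow 2).const_mul (Ts/2)))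
    exact this.congr_deriv (by push_cast [Pi.sub_apply]; ring)
  rw [hD.deriv, hW]
  simp [Matrix.mulVec, dotProduct, Fin.sum_univ_three]
  subst h1 h2
  field_simp
  ring
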